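/- There is a constant C > 0 such that for every σ ≥ 1 and all real u, v with u ≥ 2^{2/3}σ and v ≥ 2^{2/3}σ, the Airy kernel satisfies | ∫_0^∞ Ai(u + t) Ai(v + t) dt | ≤ (C/√σ) · e^{−(2/3) u^{3/2} − (2/3) v^{3/2}}. In particular the Airy kernel restricted to [2^{2/3}σ, ∞) is uniformly exponentially small as σ → +∞. -/

import Mathlib

open MeasureTheory Set Complex

/-- `e^{iπ/3}`. -/
noncomputable def eP : ℂ := Complex.exp (Real.pi / 3 * Complex.I)

/-- `e^{-iπ/3}`. -/
noncomputable def eM : ℂ := Complex.exp (-(Real.pi / 3) * Complex.I)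

/-- The Airy function `Ai(x)`. -/
noncomputable def Ai (x : ℝ) : ℂ :=
  (2 * Real.pi * Complex.I)⁻¹ *
    ∫ u in Ioi (0 : ℝ),
      (eP * Complex.exp (-(u : ℂ) ^ 3 / 3 - x * (eP * u))
        - eM * Complex.exp (-(u : ℂ) ^ 3 / 3 - x * (eM * u)))

namespace AiryAux

structure IsOmega (ω : ℂ) : Prop where
  cube : ω ^ 3 = -1
  hre : ω.re = 1/2
  hre2 : (ω ^ 2).re = -1/2
  habs : ‖ω‖ = 1

lemma isOmega_eP : IsOmega eP := by
  have h : eP = Complex.exp (((Real.pi/3 : ℝ) : ℂ) * Complex.I) := by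
    rw [eP]; push_cast; ring_nf
  constructor
  · rw [h, ← Complex.exp_nat_mul]
    rw [show ((3:ℕ) : ℂ) * (((Real.pi/3:ℝ):ℂ) * Complex.I) = (Real.pi : ℂ) * Complex.I by
      push_cast; ring]
    exact Complex.exp_pi_mul_I
  · rw [h, Complex.exp_ofReal_mul_I_re]
    norm_num [Real.cos_pi_div_three]
  · rw [h, ← Complex.exp_nat_mul]
    rw [show ((2:ℕ) : ℂ) * (((Real.pi/3:ℝ):ℂ) * Complex.I) = ((2*Real.pi/3 : ℝ) : ℂ) * Complex.I by
      push_cast; ring]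
    rw [Complex.exp_ofReal_mul_I_re]
    rw [show 2*Real.pi/3 = Real.pi - Real.pi/3 by ring, Real.cos_pi_sub]
    norm_num [Real.cos_pi_div_three]
  · rw [h]; exact Complex.norm_exp_ofReal_mul_I _

lemma isOmega_eM : IsOmega eM := by
  have h : eM = Complex.exp (((-(Real.pi/3) : ℝ) : ℂ) * Complex.I) := by
    rw [eM]; push_cast; ring_nf
  constructor
  · rw [h, ← Complex.exp_nat_mul]
    rw [show ((3:ℕ) : ℂ) * (((-(Real.pi/3):ℝ):ℂ) * Complex.I) = -((Real.pi : ℂ) * Complex.I) by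
      push_cast; ring]
    rw [Complex.exp_neg, Complex.exp_pi_mul_I]
    norm_num
  · rw [h, Complex.exp_ofReal_mul_I_re, Real.cos_neg]
    norm_num [Real.cos_pi_div_three]
  · rw [h, ← Complex.exp_nat_mul]
    rw [show ((2:ℕ) : ℂ) * (((-(Real.pi/3):ℝ):ℂ) * Complex.I) = ((-(2*Real.pi/3) : ℝ) : ℂ) * Complex.I by
      push_cast; ring]
    rw [Complex.exp_ofReal_mul_I_re, Real.cos_neg]
    rw [show 2*Real.pi/3 = Real.pi - Real.pi/3 by ring, Real.cos_pi_sub]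
    norm_num [Real.cos_pi_div_three]
  · rw [h]; exact Complex.norm_exp_ofReal_mul_I _

noncomputable def fA (x : ℝ) (z : ℂ) : ℂ := Complex.exp (z ^ 3 / 3 - x * z)
noncomputable def fd (x : ℝ) (z : ℂ) : ℂ := (z ^ 2 - x) * Complex.exp (z ^ 3 / 3 - x * z)

/-- the real part of the exponent along the shifted ray -/
noncomputable def R (x a u : ℝ) : ℝ :=
  a^3/3 - u^3/3 - x*a + (a^2*u - x*u)/2 - a*u^2/2

variable {ω : ℂ}

lemma key_eq (hω : IsOmega ω) (x a u : ℝ) :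
    ((a : ℂ) + ω * u) ^ 3 / 3 - (x : ℂ) * ((a : ℂ) + ω * u)
      = ((a^3/3 - u^3/3 - x*a : ℝ) : ℂ) + ((a^2*u - x*u : ℝ) : ℂ) * ω
        + ((a*u^2 : ℝ) : ℂ) * ω ^ 2 := by
  push_cast
  linear_combination ((u:ℂ)^3/3) * hω.cube

lemma key_re (hω : IsOmega ω) (x a u : ℝ) :
    (((a : ℂ) + ω * u) ^ 3 / 3 - (x : ℂ) * ((a : ℂ) + ω * u)).re = R x a u := by
  rw [key_eq hω, R]
  simp only [Complex.add_re, Complex.mul_re, Complex.ofReal_re, Complex.ofReal_im,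
    zero_mul, mul_zero, sub_zero, zero_sub, hω.hre, hω.hre2]
  ring

lemma norm_fA (hω : IsOmega ω) (x a u : ℝ) :
    ‖fA x ((a : ℂ) + ω * u)‖ = Real.exp (R x a u) := by
  rw [fA, Complex.norm_exp, key_re hω]

lemma R_le {x a u : ℝ} (hx : 0 ≤ x) (ha0 : 0 ≤ a) (ha : a ≤ Real.sqrt x) (hu : 0 ≤ u) :
    R x a u ≤ -u^3/3 := by
  have h1 : a^2 ≤ x := by
    have h2 : a^2 ≤ (Real.sqrt x)^2 := by nlinarith [Real.sqrt_nonneg x]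
    calc a^2 ≤ (Real.sqrt x)^2 := h2
    _ = x := Real.sq_sqrt hx
  have h2 : a^3 ≤ x*a := by nlinarith
  have h3 : (a^2 - x)*u ≤ 0 := mul_nonpos_of_nonpos_of_nonneg (by linarith) hu
  have h4 : 0 ≤ a*u^2 := mul_nonneg ha0 (sq_nonneg u)
  rw [R]; nlinarith

lemma R_sqrt {x : ℝ} (hx : 0 ≤ x) (u : ℝ) :
    R x (Real.sqrt x) u = -(2/3)*(x*Real.sqrt x) - Real.sqrt x * u^2/2 - u^3/3 := by
  have h : (Real.sqrt x)^2 = x := Real.sq_sqrt hx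
  rw [R]
  linear_combination (Real.sqrt x/3 + u/2) * h

lemma cube_ge {u : ℝ} (hu : 0 ≤ u) : u - 1 ≤ u^3 := by
  nlinarith [mul_nonneg hu (sq_nonneg (u-1)), sq_nonneg (u - 1/2)]

lemma integrable_exp_cube : IntegrableOn (fun u : ℝ => Real.exp (-u^3/3)) (Ioi 0) := by
  apply Integrable.mono'
    ((exp_neg_integrableOn_Ioi 0 (show (0:ℝ) < 1/3 by norm_num)).const_mul (Real.exp (1/3)))
  · exact (Real.continuous_exp.comp (by continuity)).aestronglyMeasurable
  · rw [ae_restrict_iff' measurableSet_Ioi]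
    filter_upwards with u hu
    rw [Real.norm_eq_abs, _root_.abs_of_pos (Real.exp_pos _), ← Real.exp_add]
    exact Real.exp_le_exp.mpr (by nlinarith [cube_ge hu.le])

lemma integrable_poly_exp_cube (s y : ℝ) :
    IntegrableOn (fun u : ℝ => ((s+u)^2 + |y|) * Real.exp (-u^3/3)) (Ioi 0) := by
  apply Integrable.mono'
    ((exp_neg_integrableOn_Ioi 0 (show (0:ℝ) < 1/6 by norm_num)).const_mul
      ((2*s^2 + |y| + 288) * Real.exp (1/3)))
  · exact ((by continuity : Continuous fun u : ℝ => ((s+u)^2 + |y|)).mul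
      (Real.continuous_exp.comp (by continuity))).aestronglyMeasurable
  · rw [ae_restrict_iff' measurableSet_Ioi]
    filter_upwards with u hu
    have hu0 : (0:ℝ) ≤ u := hu.le
    have e1 : u^2 ≤ 144 * Real.exp (u/6) := by
      have h12 := Real.add_one_le_exp (u/12)
      have hsq : Real.exp (u/6) = Real.exp (u/12) * Real.exp (u/12) := by
        rw [← Real.exp_add]; ring_nf
      nlinarith [Real.exp_pos (u/12)]
    have e2 : (1:ℝ) ≤ Real.exp (u/6) := Real.one_le_exp (by positivity)
    have hpoly : (s+u)^2 + |y| ≤ (2*s^2 + |y| + 288) * Real.exp (u/6) := by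
      nlinarith [sq_nonneg (s-u), abs_nonneg y]
    have hexp : Real.exp (-u^3/3) ≤ Real.exp (1/3) * Real.exp (-(1/3)*u) := by
      rw [← Real.exp_add]
      exact Real.exp_le_exp.mpr (by nlinarith [cube_ge hu0])
    have hnn : (0:ℝ) ≤ (s+u)^2 + |y| := by positivity
    rw [Real.norm_eq_abs, _root_.abs_of_nonneg (by positivity)]
    calc ((s+u)^2 + |y|) * Real.exp (-u^3/3)
        ≤ ((2*s^2 + |y| + 288) * Real.exp (u/6)) * (Real.exp (1/3) * Real.exp (-(1/3)*u)) := by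
          apply mul_le_mul hpoly hexp (Real.exp_pos _).le (by positivity)
      _ = (2*s^2 + |y| + 288) * Real.exp (1/3) * Real.exp (-(1/6)*u) := by
          have h6 : Real.exp (u/6) * (Real.exp (1/3) * Real.exp (-(1/3)*u))
              = Real.exp (1/3) * Real.exp (-(1/6)*u) := by
            rw [← Real.exp_add, ← Real.exp_add, ← Real.exp_add]
            congr 1; ring
          rw [mul_assoc, h6, ← mul_assoc]

lemma int_exp_decay {b : ℝ} (hb : 0 < b) :
    ∫ t in Ioi (0:ℝ), Real.exp (-b*t) = 1/b := by
  have h := integral_Ioi_of_hasDerivAt_of_tendsto' (a := 0) (m := 0)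
    (f := fun t : ℝ => -Real.exp (-b*t)/b) (f' := fun t => Real.exp (-b*t))
    (fun t _ => by
      have h1 : HasDerivAt (fun t : ℝ => -b*t) (-b) t := by
        simpa using (hasDerivAt_id t).const_mul (-b)
      have h2 := (h1.exp).neg.div_const b
      refine h2.congr_deriv ?_
      field_simp)
    (exp_neg_integrableOn_Ioi 0 hb)
    (by
      have : Filter.Tendsto (fun t : ℝ => Real.exp (-b*t)) Filter.atTop (nhds 0) := by
        apply Real.tendsto_exp_atBot.comp
        exact Filter.Tendsto.const_mul_atTop_of_neg (by linarith) Filter.tendsto_id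
      simpa using (this.neg.div_const b))
  rw [h]
  field_simp
  simp

lemma base_deriv (x : ℝ) (w : ℂ) :
    HasDerivAt (fun z : ℂ => Complex.exp (z ^ 3 / 3 - (x:ℂ) * z)) (fd x w) w := by
  have h2 : HasDerivAt (fun z : ℂ => z ^ 3 / 3 - (x:ℂ) * z) (w ^ 2 - x) w := by
    have h := ((hasDerivAt_pow 3 w).div_const 3).sub ((hasDerivAt_id w).const_mul (x:ℂ))
    refine h.congr_deriv ?_
    push_cast; ring
  have h4 := h2.cexp
  simpa [fd, mul_comm] using h4

lemma hasDeriv_a {ω : ℂ} (x u a : ℝ) :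
    HasDerivAt (fun a : ℝ => fA x ((a:ℂ) + ω * u)) (fd x ((a:ℂ) + ω * u)) a := by
  have h1 : HasDerivAt (fun z : ℂ => z + ω * u) 1 (a:ℂ) := (hasDerivAt_id _).add_const _
  have h := ((base_deriv x ((a:ℂ) + ω * u)).comp (a:ℂ) h1)
  have h' := h.comp_ofReal
  simpa [fA, Function.comp] using h'

lemma hasDeriv_u {ω : ℂ} (x a u : ℝ) :
    HasDerivAt (fun u : ℝ => fA x ((a:ℂ) + ω * u)) (ω * fd x ((a:ℂ) + ω * u)) u := by
  have h1 : HasDerivAt (fun w : ℂ => (a:ℂ) + ω * w) ω (u:ℂ) := by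
    simpa using ((hasDerivAt_id (u:ℂ)).const_mul ω).const_add (a:ℂ)
  have h := ((base_deriv x ((a:ℂ) + ω * u)).comp (u:ℂ) h1)
  have h' := h.comp_ofReal
  simpa [fA, Function.comp, mul_comm] using h'

lemma norm_omega_fA (hω : IsOmega ω) (x a u : ℝ) :
    ‖ω * fA x ((a:ℂ) + ω * u)‖ = Real.exp (R x a u) := by
  rw [norm_mul, hω.habs, one_mul, norm_fA hω]

lemma norm_fd_le (hω : IsOmega ω) {x a u : ℝ} (hx : 0 ≤ x) (ha0 : 0 ≤ a)
    (ha : a ≤ Real.sqrt x) (hu : 0 ≤ u) :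
    ‖fd x ((a:ℂ) + ω * u)‖ ≤ ((Real.sqrt x + u)^2 + |x|) * Real.exp (-u^3/3) := by
  rw [fd, norm_mul]
  have hexp : ‖Complex.exp (((a:ℂ) + ω * u) ^ 3 / 3 - (x:ℂ) * ((a:ℂ) + ω * u))‖
      ≤ Real.exp (-u^3/3) := by
    rw [show Complex.exp (((a:ℂ) + ω * u) ^ 3 / 3 - (x:ℂ) * ((a:ℂ) + ω * u))
        = fA x ((a:ℂ) + ω * u) from rfl, norm_fA hω]
    exact Real.exp_le_exp.mpr (by simpa using R_le hx ha0 ha hu)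
  have hz : ‖((a:ℂ) + ω * u) ^ 2 - (x:ℂ)‖ ≤ (Real.sqrt x + u)^2 + |x| := by
    calc ‖((a:ℂ) + ω * u) ^ 2 - (x:ℂ)‖ ≤ ‖((a:ℂ) + ω * u) ^ 2‖ + ‖(x:ℂ)‖ := norm_sub_le _ _
      _ = ‖(a:ℂ) + ω * u‖^2 + |x| := by rw [norm_pow, Complex.norm_real, Real.norm_eq_abs]
      _ ≤ (Real.sqrt x + u)^2 + |x| := by
          have h1 : ‖(a:ℂ) + ω * u‖ ≤ a + u := by
            calc ‖(a:ℂ) + ω * u‖ ≤ ‖(a:ℂ)‖ + ‖ω * (u:ℂ)‖ := norm_add_le _ _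
              _ = |a| + |u| := by
                  rw [norm_mul, hω.habs, one_mul,
                    Complex.norm_real, Complex.norm_real, Real.norm_eq_abs, Real.norm_eq_abs]
              _ = a + u := by rw [_root_.abs_of_nonneg ha0, _root_.abs_of_nonneg hu]
          have h2 : a + u ≤ Real.sqrt x + u := by linarith
          have := pow_le_pow_left₀ (norm_nonneg _) (h1.trans h2) 2
          linarith
  exact mul_le_mul hz hexp (norm_nonneg _) (by positivity)

lemma integrable_fA_ray (hω : IsOmega ω) {x a : ℝ} (hx : 0 ≤ x) (ha0 : 0 ≤ a)
    (ha : a ≤ Real.sqrt x) :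
    IntegrableOn (fun u : ℝ => ω * fA x ((a:ℂ) + ω * u)) (Ioi 0) := by
  apply Integrable.mono' integrable_exp_cube
  · apply Continuous.aestronglyMeasurable
    unfold fA
    continuity
  · rw [ae_restrict_iff' measurableSet_Ioi]
    filter_upwards with u hu
    rw [norm_omega_fA hω]
    exact Real.exp_le_exp.mpr (by simpa using R_le hx ha0 ha hu.le)

lemma integrable_fd_ray (hω : IsOmega ω) {x a : ℝ} (hx : 0 ≤ x) (ha0 : 0 ≤ a)
    (ha : a ≤ Real.sqrt x) :
    IntegrableOn (fun u : ℝ => ω * fd x ((a:ℂ) + ω * u)) (Ioi 0) := by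
  apply Integrable.mono' (integrable_poly_exp_cube (Real.sqrt x) x)
  · apply Continuous.aestronglyMeasurable
    unfold fd
    continuity
  · rw [ae_restrict_iff' measurableSet_Ioi]
    filter_upwards with u hu
    rw [norm_mul, hω.habs, one_mul]
    exact norm_fd_le hω hx ha0 ha hu.le

lemma tendsto_fA (hω : IsOmega ω) {x a : ℝ} (hx : 0 ≤ x) (ha0 : 0 ≤ a)
    (ha : a ≤ Real.sqrt x) :
    Filter.Tendsto (fun u : ℝ => fA x ((a:ℂ) + ω * u)) Filter.atTop (nhds 0) := by
  apply squeeze_zero_norm' (a := fun u : ℝ => Real.exp (-u^3/3))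
  · filter_upwards [Filter.eventually_ge_atTop (0:ℝ)] with u hu
    rw [norm_fA hω]
    exact Real.exp_le_exp.mpr (by simpa using R_le hx ha0 ha hu)
  · apply Real.tendsto_exp_atBot.comp
    have h3 : Filter.Tendsto (fun u : ℝ => u^3) Filter.atTop Filter.atTop :=
      Filter.tendsto_pow_atTop (by norm_num)
    have := Filter.Tendsto.const_mul_atTop_of_neg (show (-1/3 : ℝ) < 0 by norm_num) h3
    exact this.congr (fun u => by ring)

lemma int_u (hω : IsOmega ω) {x a : ℝ} (hx : 0 ≤ x) (ha0 : 0 ≤ a) (ha : a ≤ Real.sqrt x) :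
    ∫ u in Ioi (0:ℝ), ω * fd x ((a:ℂ) + ω * u) = -(fA x (a:ℂ)) := by
  have h := integral_Ioi_of_hasDerivAt_of_tendsto' (a := 0) (m := 0)
    (f := fun u : ℝ => fA x ((a:ℂ) + ω * u)) (f' := fun u => ω * fd x ((a:ℂ) + ω * u))
    (fun u _ => hasDeriv_u x a u) (integrable_fd_ray hω hx ha0 ha) (tendsto_fA hω hx ha0 ha)
  rw [h]
  norm_num

lemma ftc_a {ω : ℂ} (x u : ℝ) :
    ∫ a in (0:ℝ)..Real.sqrt x, fd x ((a:ℂ) + ω * u)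
      = fA x ((Real.sqrt x : ℝ) + ω * u) - fA x (((0:ℝ) : ℂ) + ω * u) := by
  apply intervalIntegral.integral_eq_sub_of_hasDerivAt (fun a _ => hasDeriv_a x u a)
  apply Continuous.intervalIntegrable
  unfold fd
  continuity

lemma fubini (hω : IsOmega ω) {x : ℝ} (hx : 0 ≤ x) :
    (∫ u in Ioi (0:ℝ), ∫ a in Ioc (0:ℝ) (Real.sqrt x), ω * fd x ((a:ℂ) + ω * u))
      = ∫ a in Ioc (0:ℝ) (Real.sqrt x), ∫ u in Ioi (0:ℝ), ω * fd x ((a:ℂ) + ω * u) := by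
  apply integral_integral_swap
  apply Integrable.mono'
    (g := fun p : ℝ × ℝ => (((Real.sqrt x + p.1)^2 + |x|) * Real.exp (-p.1^3/3)) * 1)
  · exact (integrable_poly_exp_cube (Real.sqrt x) x).mul_prod
      ((integrableOn_const_iff (C := (1:ℝ))).mpr (Or.inr measure_Ioc_lt_top))
  · apply Continuous.aestronglyMeasurable
    unfold Function.uncurry fd
    continuity
  · rw [Measure.prod_restrict, ae_restrict_iff' (measurableSet_Ioi.prod measurableSet_Ioc)]
    filter_upwards with p hp
    obtain ⟨hu, ha⟩ := hp
    simp only [Function.uncurry, mul_one]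
    rw [norm_mul, hω.habs, one_mul]
    exact norm_fd_le hω hx ha.1.le ha.2 hu.le

lemma shift (hω : IsOmega ω) {x : ℝ} (hx : 0 ≤ x) :
    (∫ u in Ioi (0:ℝ), ω * fA x (((0:ℝ):ℂ) + ω * u))
      = (∫ u in Ioi (0:ℝ), ω * fA x ((Real.sqrt x : ℝ) + ω * u))
        + ∫ a in (0:ℝ)..Real.sqrt x, fA x (a:ℂ) := by
  have hs0 : (0:ℝ) ≤ Real.sqrt x := Real.sqrt_nonneg x
  have hL : (∫ u in Ioi (0:ℝ), ∫ a in Ioc (0:ℝ) (Real.sqrt x), ω * fd x ((a:ℂ) + ω * u))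
      = (∫ u in Ioi (0:ℝ), ω * fA x ((Real.sqrt x : ℝ) + ω * u))
        - ∫ u in Ioi (0:ℝ), ω * fA x (((0:ℝ):ℂ) + ω * u) := by
    rw [← integral_sub (integrable_fA_ray hω hx hs0 le_rfl)
      (integrable_fA_ray hω hx le_rfl hs0)]
    apply integral_congr_ae
    filter_upwards with u
    rw [← intervalIntegral.integral_of_le hs0, intervalIntegral.integral_const_mul,
      ftc_a x u, mul_sub]
  have hR : (∫ a in Ioc (0:ℝ) (Real.sqrt x), ∫ u in Ioi (0:ℝ), ω * fd x ((a:ℂ) + ω * u))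
      = -(∫ a in (0:ℝ)..Real.sqrt x, fA x (a:ℂ)) := by
    rw [setIntegral_congr_fun measurableSet_Ioc
      (fun a ha => int_u hω hx ha.1.le ha.2)]
    rw [integral_neg, ← intervalIntegral.integral_of_le hs0]
  have key := (hL.symm.trans (fubini hω hx)).trans hR
  linear_combination -key

lemma integrand_eq (hω : IsOmega ω) (x u : ℝ) :
    ω * Complex.exp (-(u:ℂ)^3/3 - (x:ℂ)*(ω*u)) = ω * fA x (((0:ℝ):ℂ) + ω * u) := by
  rw [fA]
  congr 1
  congr 1
  push_cast
  linear_combination (-(u:ℂ)^3/3) * hω.cube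

lemma ai_repr {x : ℝ} (hx : 0 ≤ x) :
    Ai x = (2 * Real.pi * Complex.I)⁻¹ *
      ((∫ u in Ioi (0:ℝ), eP * fA x ((Real.sqrt x : ℝ) + eP * u))
        - ∫ u in Ioi (0:ℝ), eM * fA x ((Real.sqrt x : ℝ) + eM * u)) := by
  rw [Ai]
  congr 1
  have hsplit : (∫ u in Ioi (0:ℝ),
        (eP * Complex.exp (-(u : ℂ) ^ 3 / 3 - (x:ℂ) * (eP * u))
          - eM * Complex.exp (-(u : ℂ) ^ 3 / 3 - (x:ℂ) * (eM * u))))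
      = (∫ u in Ioi (0:ℝ), eP * fA x (((0:ℝ):ℂ) + eP * u))
        - ∫ u in Ioi (0:ℝ), eM * fA x (((0:ℝ):ℂ) + eM * u) := by
    rw [← integral_sub (integrable_fA_ray isOmega_eP hx le_rfl (Real.sqrt_nonneg x))
      (integrable_fA_ray isOmega_eM hx le_rfl (Real.sqrt_nonneg x))]
    apply integral_congr_ae
    filter_upwards with u
    rw [integrand_eq isOmega_eP, integrand_eq isOmega_eM]
  rw [hsplit, shift isOmega_eP hx, shift isOmega_eM hx]
  ring

lemma exp_eighth_le_two : Real.exp (1/8 : ℝ) ≤ 2 := by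
  have h1 : Real.exp (1/8 : ℝ) ≤ Real.exp (1/2 : ℝ) := Real.exp_le_exp.mpr (by norm_num)
  have h2 : Real.exp (1/2 : ℝ) * Real.exp (1/2 : ℝ) = Real.exp 1 := by
    rw [← Real.exp_add]; norm_num
  nlinarith [Real.exp_pos (1/2 : ℝ), Real.exp_one_lt_d9]

lemma normG (hω : IsOmega ω) {x : ℝ} (hx : 1 ≤ x) :
    ‖∫ u in Ioi (0:ℝ), ω * fA x ((Real.sqrt x : ℝ) + ω * u)‖
      ≤ 4 * Real.exp (-(2/3)*(x*Real.sqrt x)) := by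
  have hx0 : (0:ℝ) ≤ x := by linarith
  have hs1 : (1:ℝ) ≤ Real.sqrt x := by
    rw [show (1:ℝ) = Real.sqrt 1 by simp]
    exact Real.sqrt_le_sqrt hx
  calc ‖∫ u in Ioi (0:ℝ), ω * fA x ((Real.sqrt x : ℝ) + ω * u)‖
      ≤ ∫ u in Ioi (0:ℝ), ‖ω * fA x ((Real.sqrt x : ℝ) + ω * u)‖ :=
        norm_integral_le_integral_norm _
    _ ≤ ∫ u in Ioi (0:ℝ),
          (Real.exp (-(2/3)*(x*Real.sqrt x)) * Real.exp (1/8)) * Real.exp (-(1/2)*u) := by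
        apply integral_mono_of_nonneg (Filter.Eventually.of_forall (fun u => norm_nonneg _))
          ((exp_neg_integrableOn_Ioi 0 (show (0:ℝ) < 1/2 by norm_num)).const_mul _)
        refine (ae_restrict_iff' measurableSet_Ioi).mpr (Filter.Eventually.of_forall ?_)
        intro u hu
        have hu0 : (0:ℝ) ≤ u := hu.le
        dsimp only
        rw [norm_omega_fA hω, R_sqrt hx0, ← Real.exp_add, ← Real.exp_add]
        apply Real.exp_le_exp.mpr
        nlinarith [sq_nonneg (u - 1/2),
          mul_nonneg (by linarith : (0:ℝ) ≤ Real.sqrt x - 1) (sq_nonneg u),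
          pow_nonneg hu0 3]
    _ = (Real.exp (-(2/3)*(x*Real.sqrt x)) * Real.exp (1/8)) * (1/(1/2)) := by
        rw [MeasureTheory.integral_const_mul, int_exp_decay (show (0:ℝ) < 1/2 by norm_num)]
    _ ≤ 4 * Real.exp (-(2/3)*(x*Real.sqrt x)) := by
        nlinarith [Real.exp_pos (-(2/3)*(x*Real.sqrt x)), exp_eighth_le_two,
          mul_le_mul_of_nonneg_left exp_eighth_le_two
            (Real.exp_pos (-(2/3)*(x*Real.sqrt x))).le]

lemma rpow_three_halves {y : ℝ} (hy : 0 ≤ y) : y ^ ((3:ℝ)/2) = y * Real.sqrt y := by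
  rcases eq_or_lt_of_le hy with h|h
  · rw [← h]
    simp [Real.zero_rpow (by norm_num : ((3:ℝ)/2) ≠ 0)]
  · rw [show ((3:ℝ)/2) = 1 + 1/2 by norm_num, Real.rpow_add h, Real.rpow_one,
      ← Real.sqrt_eq_rpow]

lemma ai_bound {x : ℝ} (hx : 1 ≤ x) : ‖Ai x‖ ≤ 2 * Real.exp (-(2/3) * x ^ ((3:ℝ)/2)) := by
  have hx0 : (0:ℝ) ≤ x := by linarith
  rw [ai_repr hx0, norm_mul]
  have hnorm : ‖((2:ℂ) * (Real.pi:ℂ) * Complex.I)⁻¹‖ = (2*Real.pi)⁻¹ := by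
    rw [norm_inv, norm_mul, norm_mul, Complex.norm_I, mul_one, Complex.norm_real,
      Real.norm_eq_abs, _root_.abs_of_pos Real.pi_pos]
    norm_num
  rw [hnorm, rpow_three_halves hx0]
  have h1 := normG isOmega_eP hx
  have h2 := normG isOmega_eM hx
  have h3 : ‖(∫ u in Ioi (0:ℝ), eP * fA x ((Real.sqrt x : ℝ) + eP * u))
      - ∫ u in Ioi (0:ℝ), eM * fA x ((Real.sqrt x : ℝ) + eM * u)‖
      ≤ 8 * Real.exp (-(2/3)*(x*Real.sqrt x)) := by
    calc ‖_ - _‖ ≤ _ + _ := norm_sub_le _ _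
      _ ≤ 8 * Real.exp (-(2/3)*(x*Real.sqrt x)) := by linarith
  have hπ := Real.pi_gt_three
  have he := Real.exp_pos (-(2/3)*(x*Real.sqrt x))
  calc (2*Real.pi)⁻¹ * ‖(∫ u in Ioi (0:ℝ), eP * fA x ((Real.sqrt x : ℝ) + eP * u))
        - ∫ u in Ioi (0:ℝ), eM * fA x ((Real.sqrt x : ℝ) + eM * u)‖
      ≤ (2*Real.pi)⁻¹ * (8 * Real.exp (-(2/3)*(x*Real.sqrt x))) := by
        apply mul_le_mul_of_nonneg_left h3 (by positivity)
    _ ≤ 2 * Real.exp (-(2/3) * (x*Real.sqrt x)) := by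
        rw [inv_mul_le_iff₀ (by linarith)]
        nlinarith
  
lemma rpow_32_lower {w t : ℝ} (hw : 0 ≤ w) (ht : 0 ≤ t) :
    w ^ ((3:ℝ)/2) + Real.sqrt w * t ≤ (w+t) ^ ((3:ℝ)/2) := by
  rw [rpow_three_halves hw, rpow_three_halves (by linarith)]
  have h2 : Real.sqrt w ≤ Real.sqrt (w+t) := Real.sqrt_le_sqrt (by linarith)
  have h3 : (w+t) * Real.sqrt w ≤ (w+t) * Real.sqrt (w+t) :=
    mul_le_mul_of_nonneg_left h2 (by linarith)
  nlinarith [Real.sqrt_nonneg w]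

end AiryAux

open AiryAux

/-- The Airy kernel `K_Ai(u,v) = ∫₀^∞ Ai(u+t)Ai(v+t) dt` restricted to `[2^{2/3}σ, ∞)` is
uniformly exponentially small as `σ → +∞`: there is `C > 0` such that for every `σ ≥ 1` and
all `u, v ≥ 2^{2/3}σ`,
`|K_Ai(u,v)| ≤ (C/√σ) e^{−(2/3)u^{3/2} − (2/3)v^{3/2}}`. -/
theorem airyKernel_exponentially_small :
    ∃ C > (0 : ℝ), ∀ σ : ℝ, 1 ≤ σ → ∀ u v : ℝ,
      (2 : ℝ) ^ ((2 : ℝ) / 3) * σ ≤ u → (2 : ℝ) ^ ((2 : ℝ) / 3) * σ ≤ v →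
      ‖∫ t in Ioi (0 : ℝ), Ai (u + t) * Ai (v + t)‖ ≤
        C / Real.sqrt σ *
          Real.exp (-(2 / 3) * u ^ ((3 : ℝ) / 2) - (2 / 3) * v ^ ((3 : ℝ) / 2)) := by
  refine ⟨4, by norm_num, fun σ hσ u v hu hv => ?_⟩
  have h2 : (1:ℝ) ≤ (2:ℝ) ^ ((2:ℝ)/3) := by
    calc (1:ℝ) = (2:ℝ) ^ (0:ℝ) := by norm_num
    _ ≤ (2:ℝ) ^ ((2:ℝ)/3) := Real.rpow_le_rpow_of_exponent_le (by norm_num) (by norm_num)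
  have hσ0 : (0:ℝ) < σ := by linarith
  have huσ : σ ≤ u := by nlinarith
  have hvσ : σ ≤ v := by nlinarith
  have hu1 : (1:ℝ) ≤ u := by linarith
  have hv1 : (1:ℝ) ≤ v := by linarith
  have hu0 : (0:ℝ) ≤ u := by linarith
  have hv0 : (0:ℝ) ≤ v := by linarith
  have hsσ : (0:ℝ) < Real.sqrt σ := Real.sqrt_pos.mpr hσ0
  set E : ℝ := Real.exp (-(2 / 3) * u ^ ((3 : ℝ) / 2) - (2 / 3) * v ^ ((3 : ℝ) / 2)) with hE
  have hpt : ∀ t ∈ Ioi (0:ℝ), ‖Ai (u+t) * Ai (v+t)‖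
      ≤ (4 * E) * Real.exp (-Real.sqrt σ * t) := by
    intro t ht'
    have ht : (0:ℝ) ≤ t := ht'.le
    rw [norm_mul]
    have b1 := ai_bound (show (1:ℝ) ≤ u + t by linarith)
    have b2 := ai_bound (show (1:ℝ) ≤ v + t by linarith)
    calc ‖Ai (u+t)‖ * ‖Ai (v+t)‖
        ≤ (2 * Real.exp (-(2/3) * (u+t) ^ ((3:ℝ)/2)))
            * (2 * Real.exp (-(2/3) * (v+t) ^ ((3:ℝ)/2))) :=
          mul_le_mul b1 b2 (norm_nonneg _) (by positivity)
      _ = 4 * Real.exp (-(2/3) * (u+t) ^ ((3:ℝ)/2) + -(2/3) * (v+t) ^ ((3:ℝ)/2)) := by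
          rw [Real.exp_add]; ring
      _ ≤ (4 * E) * Real.exp (-Real.sqrt σ * t) := by
          rw [hE, mul_assoc, ← Real.exp_add]
          apply mul_le_mul_of_nonneg_left _ (by norm_num)
          apply Real.exp_le_exp.mpr
          have k1 := rpow_32_lower hu0 ht
          have k2 := rpow_32_lower hv0 ht
          have k3 : Real.sqrt σ * t ≤ Real.sqrt u * t :=
            mul_le_mul_of_nonneg_right (Real.sqrt_le_sqrt huσ) ht
          have k4 : Real.sqrt σ * t ≤ Real.sqrt v * t :=
            mul_le_mul_of_nonneg_right (Real.sqrt_le_sqrt hvσ) ht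
          have k5 : 0 ≤ Real.sqrt σ * t := mul_nonneg (Real.sqrt_nonneg _) ht
          linarith
  calc ‖∫ t in Ioi (0:ℝ), Ai (u+t) * Ai (v+t)‖
      ≤ ∫ t in Ioi (0:ℝ), ‖Ai (u+t) * Ai (v+t)‖ := norm_integral_le_integral_norm _
    _ ≤ ∫ t in Ioi (0:ℝ), (4 * E) * Real.exp (-Real.sqrt σ * t) := by
        apply integral_mono_of_nonneg (Filter.Eventually.of_forall (fun t => norm_nonneg _))
          ((exp_neg_integrableOn_Ioi 0 hsσ).const_mul _)
        exact (ae_restrict_iff' measurableSet_Ioi).mpr (Filter.Eventually.of_forall hpt)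
    _ = (4 * E) * (1 / Real.sqrt σ) := by
        rw [MeasureTheory.integral_const_mul, int_exp_decay hsσ]
    _ = 4 / Real.sqrt σ * E := by ring
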